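/- Let k ≥ 2, and define W(y) = Γ(k)^(-1/2) (4πy)^(k/2) e^(-2πy) for y > 0. Then W attains its maximum at y₀ = k/(4π), and there exist absolute constants c₁, c₂ > 0 such that c₁ k^(1/4) ≤ W(y₀) ≤ c₂ k^(1/4). Moreover, for y > 10k one has W(y) ≤ C k^(1/4) e^(-πy) for an absolute constant C. -/

import Mathlib

open Real


private lemma stirling_lower {n : ℕ} (hn : 1 ≤ n) : √π ≤ Stirling.stirlingSeq n := by
  obtain ⟨m, rfl⟩ : ∃ m, n = m + 1 := ⟨n - 1, by omega⟩
  refine le_of_tendsto Stirling.tendsto_stirlingSeq_sqrt_pi ?_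
  filter_upwards [Filter.eventually_ge_atTop (m+1)] with j hj
  obtain ⟨i, rfl⟩ := Nat.exists_eq_add_of_le hj
  have h := Stirling.stirlingSeq'_antitone (Nat.le_add_right m i)
  simpa [Function.comp, Nat.add_right_comm] using h

private lemma stirling_upper {n : ℕ} (hn : 1 ≤ n) :
    Stirling.stirlingSeq n ≤ exp 1 / √2 := by
  obtain ⟨m, rfl⟩ : ∃ m, n = m + 1 := ⟨n - 1, by omega⟩
  have h := Stirling.stirlingSeq'_antitone (Nat.zero_le m)
  simpa [Function.comp, Stirling.stirlingSeq_one] using h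

private lemma factorial_bounds {n : ℕ} (hn : 1 ≤ n) :
    √π * √(2*n) * ((n:ℝ)/exp 1)^n ≤ (n.factorial : ℝ) ∧
    (n.factorial : ℝ) ≤ exp 1 * √n * ((n:ℝ)/exp 1)^n := by
  have hn0 : (0:ℝ) < n := by exact_mod_cast hn
  have hP : (0:ℝ) < ((n:ℝ)/exp 1)^n := by positivity
  have hd : (0:ℝ) < √(2*n) * ((n:ℝ)/exp 1)^n := by positivity
  have hfact : (n.factorial : ℝ) = Stirling.stirlingSeq n * (√(2*n) * ((n:ℝ)/exp 1)^n) := by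
    rw [Stirling.stirlingSeq]; field_simp
  constructor
  · rw [hfact, mul_assoc]
    exact mul_le_mul_of_nonneg_right (stirling_lower hn) hd.le
  · rw [hfact]
    have h2 : √(2*(n:ℝ)) = √2 * √n := Real.sqrt_mul (by norm_num) _
    have h3 : Stirling.stirlingSeq n * √(2*n) ≤ exp 1 * √n := by
      rw [h2, ← mul_assoc]
      have : Stirling.stirlingSeq n * √2 ≤ (exp 1 / √2) * √2 :=
        mul_le_mul_of_nonneg_right (stirling_upper hn) (Real.sqrt_nonneg 2)
      rw [div_mul_cancel₀] at this
      · exact mul_le_mul_of_nonneg_right this (Real.sqrt_nonneg _)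
      · positivity
    calc Stirling.stirlingSeq n * (√(2*n) * ((n:ℝ)/exp 1)^n)
        = (Stirling.stirlingSeq n * √(2*n)) * ((n:ℝ)/exp 1)^n := by ring
      _ ≤ (exp 1 * √n) * ((n:ℝ)/exp 1)^n := mul_le_mul_of_nonneg_right h3 hP.le

private lemma aux1 (s E Q : ℝ) (hE : E ≠ 0) :
    2/E^2 * s * (E*s*Q) = s*s*(2*E⁻¹*Q) := by field_simp

private lemma aux2 (s t Q : ℝ) (ht : t ≠ 0) : s*s*Q = 1/t*s*(t*s*Q) := by
  field_simp


set_option maxHeartbeats 1000000 in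
theorem whittaker_max :
    ∃ c₁ c₂ C : ℝ, 0 < c₁ ∧ 0 < c₂ ∧ 0 < C ∧
      ∀ (k : ℕ), 2 ≤ k →
      ∀ W : ℝ → ℝ,
        (∀ y : ℝ, 0 < y →
          W y = (Real.Gamma k) ^ (-(1 / 2) : ℝ) * (4 * π * y) ^ ((k : ℝ) / 2) *
            Real.exp (-2 * π * y)) →
        (∀ y : ℝ, 0 < y → W y ≤ W ((k : ℝ) / (4 * π))) ∧
        c₁ * (k : ℝ) ^ ((1 : ℝ) / 4) ≤ W ((k : ℝ) / (4 * π)) ∧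
        W ((k : ℝ) / (4 * π)) ≤ c₂ * (k : ℝ) ^ ((1 : ℝ) / 4) ∧
        (∀ y : ℝ, 10 * k < y → W y ≤ C * (k : ℝ) ^ ((1 : ℝ) / 4) * Real.exp (-π * y)) := by
  refine ⟨√(2/(exp 1)^2), √(1/√π), √(1/√π), by positivity,
    by have := pi_pos; positivity, by have := pi_pos; positivity, ?_⟩
  intro k hk W hW
  obtain ⟨n, rfl⟩ : ∃ n, k = n + 1 := ⟨k - 1, by omega⟩
  set k := n + 1 with hkdef
  have hn1 : 1 ≤ n := by omega
  have hn0 : (0:ℝ) < n := by exact_mod_cast hn1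
  have hk0 : (0:ℝ) < k := by positivity
  have hπ : (0:ℝ) < π := pi_pos
  -- Gamma = factorial
  have hn1r : (1:ℝ) ≤ n := by exact_mod_cast hn1
  have hG : Real.Gamma k = (n.factorial : ℝ) := by
    have : ((k:ℕ):ℝ) = (n:ℝ) + 1 := by simp [hkdef]
    rw [this, Real.Gamma_nat_eq_factorial]
  have hGpos : 0 < Real.Gamma k := Real.Gamma_pos_of_pos hk0
  obtain ⟨hF1, hF2⟩ := factorial_bounds hn1
  set P : ℝ := ((n:ℝ)/exp 1)^n with hPdef
  have hPpos : 0 < P := by positivity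
  have hss : √(k:ℝ) * √(k:ℝ) = (k:ℝ) := Real.mul_self_sqrt hk0.le
  have hGlo : √π * √(k:ℝ) * P ≤ Real.Gamma k := by
    rw [hG]
    refine le_trans ?_ hF1
    gcongr
    push_cast [hkdef]; linarith [hn1r]
  have hGhi : Real.Gamma k ≤ exp 1 * √(k:ℝ) * P := by
    rw [hG]
    refine hF2.trans ?_
    gcongr
    omega
  -- value at the maximum point
  have hy0pos : (0:ℝ) < (k:ℝ)/(4*π) := by positivity
  have hW0 : W ((k:ℝ)/(4*π))
      = Real.Gamma k ^ (-(1/2):ℝ) * (k:ℝ)^((k:ℝ)/2) * exp (-(k:ℝ)/2) := by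
    rw [hW _ hy0pos]
    have h1 : 4*π*((k:ℝ)/(4*π)) = (k:ℝ) := by field_simp
    have h2 : -2*π*((k:ℝ)/(4*π)) = -(k:ℝ)/2 := by field_simp; ring
    rw [h1, h2]
  have hW0nn : 0 ≤ W ((k:ℝ)/(4*π)) := by
    rw [hW0]; positivity
  have e1 : (Real.Gamma k ^ (-(1/2):ℝ))^(2:ℕ) = (Real.Gamma k)⁻¹ := by
    rw [← Real.rpow_natCast (Real.Gamma k ^ (-(1/2):ℝ)) 2, ← Real.rpow_mul hGpos.le]
    norm_num [Real.rpow_neg_one]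
  have e2 : ((k:ℝ)^((k:ℝ)/2))^(2:ℕ) = (k:ℝ)^((k:ℝ)) := by
    rw [← Real.rpow_natCast ((k:ℝ)^((k:ℝ)/2)) 2, ← Real.rpow_mul hk0.le]
    norm_num
  have e3 : (exp (-(k:ℝ)/2))^(2:ℕ) = exp (-(k:ℝ)) := by
    rw [← Real.exp_nat_mul]; congr 1; push_cast; ring
  have hW0sq : (W ((k:ℝ)/(4*π)))^2
      = ((k:ℝ)^((k:ℝ)) * exp (-(k:ℝ))) / Real.Gamma k := by
    rw [hW0, mul_pow, mul_pow, e1, e2, e3]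
    field_simp
  -- Bernoulli-type bounds
  set B : ℝ := ((k:ℝ)/(n:ℝ))^n with hBdef
  have hkn : (k:ℝ)/(n:ℝ) = 1 + 1/(n:ℝ) := by push_cast [hkdef]; field_simp
  have hB1 : (2:ℝ) ≤ B := by
    have h := one_add_mul_le_pow (a := 1/(n:ℝ)) (le_trans (by norm_num : (-2:ℝ) ≤ 0) (by positivity)) n
    rw [hBdef, hkn]
    have : (n:ℝ) * (1/(n:ℝ)) = 1 := by field_simp
    rw [this] at h
    linarith
  have hB2 : B ≤ exp 1 := by
    have h1 : 1 + 1/(n:ℝ) ≤ exp (1/(n:ℝ)) := by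
      have := Real.add_one_le_exp (1/(n:ℝ)); linarith
    have h2 := pow_le_pow_left₀ (by positivity) h1 n
    rw [← Real.exp_nat_mul] at h2
    have : (n:ℝ) * (1/(n:ℝ)) = 1 := by field_simp
    rw [this] at h2
    rw [hBdef, hkn]
    exact h2
  have hA : (k:ℝ)^((k:ℝ)) * exp (-(k:ℝ)) = (k:ℝ) * B * (exp 1)⁻¹ * P := by
    have hkr : (k:ℝ)^((k:ℝ)) = (k:ℝ)^(n+1 : ℕ) := by
      rw [← Real.rpow_natCast (k:ℝ) (n+1)]
      try norm_num
    have hex : exp (-(k:ℝ)) = ((exp 1)⁻¹)^(n+1 : ℕ) := by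
      rw [← Real.exp_neg, ← Real.exp_nat_mul]
      congr 1
      push_cast [hkdef]; ring
    rw [hkr, hex, hBdef, hPdef, div_pow, div_pow, pow_succ]
    have he : (0:ℝ) < exp 1 := Real.exp_pos 1
    field_simp [Real.exp_add]
    ring_nf; rw [inv_pow]; field_simp
  -- squared bounds
  have he : (0:ℝ) < exp 1 := Real.exp_pos 1
  have hsknn : (0:ℝ) < √(k:ℝ) := Real.sqrt_pos.mpr hk0
  have hWsqlo : 2/(exp 1)^2 * √(k:ℝ) ≤ (W ((k:ℝ)/(4*π)))^2 := by
    rw [hW0sq, le_div_iff₀ hGpos, hA]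
    calc 2/(exp 1)^2 * √(k:ℝ) * Real.Gamma k
        ≤ 2/(exp 1)^2 * √(k:ℝ) * (exp 1 * √(k:ℝ) * P) := by
          apply mul_le_mul_of_nonneg_left hGhi (by positivity)
      _ = √(k:ℝ) * √(k:ℝ) * (2 * (exp 1)⁻¹ * P) := aux1 _ _ _ (Real.exp_ne_zero 1)
      _ = (k:ℝ) * 2 * (exp 1)⁻¹ * P := by rw [hss]; ring
      _ ≤ (k:ℝ) * B * (exp 1)⁻¹ * P := by gcongr
  have hWsqhi : (W ((k:ℝ)/(4*π)))^2 ≤ 1/√π * √(k:ℝ) := by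
    rw [hW0sq, div_le_iff₀ hGpos, hA]
    have hπs : (0:ℝ) < √π := Real.sqrt_pos.mpr hπ
    calc (k:ℝ) * B * (exp 1)⁻¹ * P
        ≤ (k:ℝ) * exp 1 * (exp 1)⁻¹ * P := by gcongr
      _ = (k:ℝ) * P := by field_simp
      _ = √(k:ℝ) * √(k:ℝ) * P := by rw [hss]
      _ = 1/√π * √(k:ℝ) * (√π * √(k:ℝ) * P) := aux2 _ _ _ hπs.ne'
      _ ≤ 1/√π * √(k:ℝ) * Real.Gamma k :=
          mul_le_mul_of_nonneg_left hGlo (by positivity)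
  have h14 : ((k:ℝ))^((1:ℝ)/4) = √(√(k:ℝ)) := by
    rw [Real.sqrt_eq_rpow, Real.sqrt_eq_rpow, ← Real.rpow_mul hk0.le]
    norm_num
  have hlow : √(2/(exp 1)^2) * (k:ℝ)^((1:ℝ)/4) ≤ W ((k:ℝ)/(4*π)) := by
    rw [h14, ← Real.sqrt_mul (by positivity) (√(k:ℝ)), ← Real.sqrt_sq hW0nn]
    exact Real.sqrt_le_sqrt hWsqlo
  have hhigh : W ((k:ℝ)/(4*π)) ≤ √(1/√π) * (k:ℝ)^((1:ℝ)/4) := by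
    rw [h14, ← Real.sqrt_mul (by positivity) (√(k:ℝ)), ← Real.sqrt_sq hW0nn]
    exact Real.sqrt_le_sqrt hWsqhi
  -- key log inequality for maximality
  have key : ∀ y : ℝ, 0 < y →
      (4*π*y)^((k:ℝ)/2) * exp (-2*π*y) ≤ (k:ℝ)^((k:ℝ)/2) * exp (-(k:ℝ)/2) := by
    intro y hy
    have h4 : (0:ℝ) < 4*π*y := by positivity
    rw [← Real.log_le_log_iff (by positivity) (by positivity),
      Real.log_mul (by positivity) (Real.exp_pos _).ne',
      Real.log_mul (by positivity) (Real.exp_pos _).ne',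
      Real.log_exp, Real.log_exp, Real.log_rpow h4, Real.log_rpow hk0]
    have hlog : Real.log (4*π*y) - Real.log (k:ℝ) ≤ 4*π*y/(k:ℝ) - 1 := by
      rw [← Real.log_div h4.ne' hk0.ne']
      exact Real.log_le_sub_one_of_pos (by positivity)
    have hmul := mul_le_mul_of_nonneg_left hlog (by positivity : (0:ℝ) ≤ (k:ℝ)/2)
    have hid : (k:ℝ)/2 * (4*π*y/(k:ℝ) - 1) = 2*π*y - (k:ℝ)/2 := by
      field_simp; ring
    rw [hid] at hmul
    linarith
  have hmax : ∀ y : ℝ, 0 < y → W y ≤ W ((k:ℝ)/(4*π)) := by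
    intro y hy
    calc W y = Real.Gamma k ^ (-(1/2):ℝ) * ((4*π*y)^((k:ℝ)/2) * exp (-2*π*y)) := by
          rw [hW y hy]; ring
      _ ≤ Real.Gamma k ^ (-(1/2):ℝ) * ((k:ℝ)^((k:ℝ)/2) * exp (-(k:ℝ)/2)) :=
          mul_le_mul_of_nonneg_left (key y hy) (Real.rpow_nonneg hGpos.le _)
      _ = W ((k:ℝ)/(4*π)) := by rw [hW0]; ring
  refine ⟨hmax, hlow, hhigh, ?_⟩
  -- decay regime
  intro y hy
  have hy0 : (0:ℝ) < y := by
    have : (0:ℝ) < 10*(k:ℝ) := by positivity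
    linarith
  have h4 : (0:ℝ) < 4*π*y := by positivity
  have hu16 : (16:ℝ) ≤ 4*π*y/(k:ℝ) := by
    rw [le_div_iff₀ hk0]
    have hpy : 3*y ≤ π*y := mul_le_mul_of_nonneg_right pi_gt_three.le hy0.le
    linarith
  have hupos : (0:ℝ) < 4*π*y/(k:ℝ) := by linarith
  set u : ℝ := 4*π*y/(k:ℝ) with hudef
  have hsu : (4:ℝ) ≤ √u := by
    have h16 : √(16:ℝ) = 4 := by
      rw [show (16:ℝ) = 4^2 by norm_num, Real.sqrt_sq (by norm_num)]
    rw [← h16]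
    exact Real.sqrt_le_sqrt hu16
  have hlogu : Real.log u ≤ u/2 - 1 := by
    have h1 : Real.log (√u) ≤ √u - 1 :=
      Real.log_le_sub_one_of_pos (Real.sqrt_pos.mpr hupos)
    have h2 : Real.log u = 2 * Real.log (√u) := by
      rw [Real.log_sqrt hupos.le]; ring
    have h3 : √u * √u = u := Real.mul_self_sqrt hupos.le
    have h4' : 4*√u ≤ √u*√u := mul_le_mul_of_nonneg_right hsu (Real.sqrt_nonneg u)
    linarith
  have key2 : (4*π*y)^((k:ℝ)/2) * exp (-2*π*y)
      ≤ (k:ℝ)^((k:ℝ)/2) * exp (-(k:ℝ)/2) * exp (-π*y) := by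
    rw [← Real.log_le_log_iff (by positivity) (by positivity),
      Real.log_mul (by positivity) (Real.exp_pos _).ne',
      Real.log_mul (by positivity) (Real.exp_pos _).ne',
      Real.log_mul (by positivity) (Real.exp_pos _).ne',
      Real.log_exp, Real.log_exp, Real.log_exp, Real.log_rpow h4, Real.log_rpow hk0]
    have hlog : Real.log (4*π*y) - Real.log (k:ℝ) = Real.log u := by
      rw [hudef, Real.log_div h4.ne' hk0.ne']
    have hmul := mul_le_mul_of_nonneg_left hlogu (by positivity : (0:ℝ) ≤ (k:ℝ)/2)
    have hid : (k:ℝ)/2 * (u/2 - 1) = π*y - (k:ℝ)/2 := by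
      rw [hudef]; field_simp; ring
    rw [hid] at hmul
    have := hlog ▸ hmul
    linarith [this]
  calc W y = Real.Gamma k ^ (-(1/2):ℝ) * (4*π*y)^((k:ℝ)/2) * exp (-2*π*y) := hW y hy0
    _ = Real.Gamma k ^ (-(1/2):ℝ) * ((4*π*y)^((k:ℝ)/2) * exp (-2*π*y)) := by ring
    _ ≤ Real.Gamma k ^ (-(1/2):ℝ) * ((k:ℝ)^((k:ℝ)/2) * exp (-(k:ℝ)/2) * exp (-π*y)) :=
        mul_le_mul_of_nonneg_left key2 (Real.rpow_nonneg hGpos.le _)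
    _ = W ((k:ℝ)/(4*π)) * exp (-π*y) := by rw [hW0]; ring
    _ ≤ √(1/√π) * (k:ℝ)^((1:ℝ)/4) * exp (-π*y) :=
        mul_le_mul_of_nonneg_right hhigh (Real.exp_nonneg _)
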